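/- Let A ∈ ℝ^{m×n}, b ∈ ℝ^m, and 1 ≤ k. Let x_QR be a minimizer of ‖b − Ax‖₂ over x ∈ K_k(AᵀA, Aᵀb), and let D ∈ ℝ^{m×(k+1)} be a matrix with linearly independent columns whose column space equals K_{k+1}(AAᵀ, b), with Moore–Penrose pseudoinverse D† = (DᵀD)⁻¹Dᵀ. Let x_LU be a minimizer of ‖D†(b − Ax)‖₂ over x ∈ K_k(AᵀA, Aᵀb). Suppose D = Q R̂ where Q ∈ ℝ^{m×(k+1)} has orthonormal columns (QᵀQ = I) and R̂ ∈ ℝ^{(k+1)×(k+1)} is upper triangular and invertible. Then ‖b − A x_QR‖₂ ≤ ‖b − A x_LU‖₂ ≤ κ(R̂) · ‖b − A x_QR‖₂, where κ(R̂) = ‖R̂‖ · ‖R̂⁻¹‖ is the condition number of R̂ in the spectral (ℓ²) operator norm. -/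

import Mathlib

open Matrix

noncomputable def vnorm {α : Type*} [Fintype α] (x : α → ℝ) : ℝ :=
  ‖(WithLp.equiv 2 (α → ℝ)).symm x‖

noncomputable def specNorm {α β : Type*} [Fintype α] [Fintype β] [DecidableEq β]
    (M : Matrix α β ℝ) : ℝ :=
  ‖LinearMap.toContinuousLinearMap (Matrix.toEuclideanLin M)‖

noncomputable def pinv {α β : Type*} [Fintype α] [Fintype β] [DecidableEq α] [DecidableEq β]
    (M : Matrix α β ℝ) : Matrix β α ℝ :=
  (Mᵀ * M)⁻¹ * Mᵀ

def krylov {α : Type*} [Fintype α] [DecidableEq α] (M : Matrix α α ℝ) (v : α → ℝ) (k : ℕ) :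
    Submodule ℝ (α → ℝ) :=
  Submodule.span ℝ {w | ∃ i < k, w = (M ^ i).mulVec v}


lemma vnorm_mulVec_le {α β : Type*} [Fintype α] [Fintype β] [DecidableEq β]
    (M : Matrix α β ℝ) (v : β → ℝ) : vnorm (M.mulVec v) ≤ specNorm M * vnorm v := by
  have h := (LinearMap.toContinuousLinearMap (Matrix.toEuclideanLin M)).le_opNorm
    ((WithLp.equiv 2 (β → ℝ)).symm v)
  simpa [vnorm, specNorm, Matrix.toEuclideanLin_apply_piLp_toLp, WithLp.equiv_symm_apply] using h

lemma vnorm_sq {α : Type*} [Fintype α] (x : α → ℝ) : vnorm x ^ 2 = x ⬝ᵥ x := by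
  rw [vnorm, EuclideanSpace.norm_eq]
  rw [Real.sq_sqrt (by positivity)]
  simp [dotProduct, sq, WithLp.equiv_symm_apply]

lemma specNorm_nonneg {α β : Type*} [Fintype α] [Fintype β] [DecidableEq β]
    (M : Matrix α β ℝ) : 0 ≤ specNorm M := norm_nonneg _

lemma vnorm_nonneg {α : Type*} [Fintype α] (x : α → ℝ) : 0 ≤ vnorm x := norm_nonneg _

lemma vnorm_orth {m k : ℕ} (Q : Matrix (Fin m) (Fin k) ℝ) (hQ : Qᵀ * Q = 1)
    (z : Fin k → ℝ) : vnorm (Q.mulVec z) = vnorm z := by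
  have h1 : (Q.mulVec z) ⬝ᵥ (Q.mulVec z) = z ⬝ᵥ z := by
    rw [dotProduct_mulVec, ← mulVec_transpose, mulVec_mulVec, hQ, one_mulVec]
  have h2 : vnorm (Q.mulVec z) ^ 2 = vnorm z ^ 2 := by
    rw [vnorm_sq, vnorm_sq, h1]
  exact (sq_eq_sq₀ (vnorm_nonneg _) (vnorm_nonneg _)).mp h2

lemma comm_pow {m n : ℕ} (A : Matrix (Fin m) (Fin n) ℝ) (i : ℕ) :
    A * (Aᵀ * A) ^ i = (A * Aᵀ) ^ i * A := by
  induction i with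
  | zero => simp
  | succ i ih =>
    rw [pow_succ, pow_succ, ← Matrix.mul_assoc, ih]
    simp only [Matrix.mul_assoc]

lemma residual_mem {m n : ℕ} (A : Matrix (Fin m) (Fin n) ℝ) (b : Fin m → ℝ) (k : ℕ)
    (x : Fin n → ℝ) (hx : x ∈ krylov (Aᵀ * A) (Aᵀ.mulVec b) k) :
    b - A.mulVec x ∈ krylov (A * Aᵀ) b (k + 1) := by
  have hb : b ∈ krylov (A * Aᵀ) b (k + 1) :=
    Submodule.subset_span ⟨0, by omega, by simp⟩
  have hAx : A.mulVec x ∈ krylov (A * Aᵀ) b (k + 1) := by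
    have hmem : A.mulVecLin x ∈ Submodule.map A.mulVecLin
        (krylov (Aᵀ * A) (Aᵀ.mulVec b) k) := Submodule.mem_map_of_mem hx
    rw [krylov, Submodule.map_span] at hmem
    refine Submodule.span_le.mpr ?_ hmem
    rintro w ⟨w', ⟨i, hi, rfl⟩, rfl⟩
    refine Submodule.subset_span ⟨i + 1, by omega, ?_⟩
    simp only [mulVecLin_apply, mulVec_mulVec]
    rw [← Matrix.mul_assoc, comm_pow, Matrix.mul_assoc, pow_succ]
  exact Submodule.sub_mem _ hb hAx

/-- Theorem 2.1: the LSQR and LSLU residual norms satisfy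
`‖r_k^QR‖ ≤ ‖r_k^LU‖ ≤ κ(R̂) ‖r_k^QR‖`. -/
theorem lslu_residual_bounds
    (m n k : ℕ) (hk : 1 ≤ k)
    (A : Matrix (Fin m) (Fin n) ℝ) (b : Fin m → ℝ)
    (D : Matrix (Fin m) (Fin (k + 1)) ℝ)
    (hD_indep : LinearIndependent ℝ (fun j : Fin (k + 1) => fun i : Fin m => D i j))
    (hD_range : LinearMap.range D.mulVecLin = krylov (A * Aᵀ) b (k + 1))
    (Q : Matrix (Fin m) (Fin (k + 1)) ℝ) (R : Matrix (Fin (k + 1)) (Fin (k + 1)) ℝ)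
    (hQR : D = Q * R)
    (hQ : Qᵀ * Q = 1)
    (hR_tri : ∀ i j : Fin (k + 1), j < i → R i j = 0)
    (hR_inv : IsUnit R.det)
    (xQR xLU : Fin n → ℝ)
    (hxQR_mem : xQR ∈ krylov (Aᵀ * A) (Aᵀ.mulVec b) k)
    (hxQR_min : ∀ x ∈ krylov (Aᵀ * A) (Aᵀ.mulVec b) k,
      vnorm (b - A.mulVec xQR) ≤ vnorm (b - A.mulVec x))
    (hxLU_mem : xLU ∈ krylov (Aᵀ * A) (Aᵀ.mulVec b) k)
    (hxLU_min : ∀ x ∈ krylov (Aᵀ * A) (Aᵀ.mulVec b) k,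
      vnorm ((pinv D).mulVec (b - A.mulVec xLU)) ≤ vnorm ((pinv D).mulVec (b - A.mulVec x))) :
    vnorm (b - A.mulVec xQR) ≤ vnorm (b - A.mulVec xLU) ∧
      vnorm (b - A.mulVec xLU) ≤ specNorm R * specNorm R⁻¹ * vnorm (b - A.mulVec xQR) := by
  set rQR := b - A.mulVec xQR with hrQR
  set rLU := b - A.mulVec xLU with hrLU
  -- Gram matrix is RᵀR, invertible
  have hGram : Dᵀ * D = Rᵀ * R := by
    rw [hQR, transpose_mul, Matrix.mul_assoc, ← Matrix.mul_assoc Qᵀ, hQ, Matrix.one_mul]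
  have hGram_det : IsUnit (Dᵀ * D).det := by
    rw [hGram, det_mul, det_transpose]
    exact hR_inv.mul hR_inv
  have hpinvD : pinv D * D = 1 := by
    rw [pinv, Matrix.mul_assoc, Matrix.nonsing_inv_mul _ hGram_det]
  -- residuals lie in the range of D
  have hrange : ∀ x ∈ krylov (Aᵀ * A) (Aᵀ.mulVec b) k,
      ∃ y, b - A.mulVec x = D.mulVec y := by
    intro x hx
    have h := residual_mem A b k x hx
    rw [← hD_range] at h
    obtain ⟨y, hy⟩ := h
    exact ⟨y, hy.symm⟩
  obtain ⟨yQR, hyQR⟩ := hrange xQR hxQR_mem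
  obtain ⟨yLU, hyLU⟩ := hrange xLU hxLU_mem
  have hpQR : (pinv D).mulVec rQR = yQR := by
    rw [hrQR, hyQR, mulVec_mulVec, hpinvD, one_mulVec]
  have hpLU : (pinv D).mulVec rLU = yLU := by
    rw [hrLU, hyLU, mulVec_mulVec, hpinvD, one_mulVec]
  have hnQR : vnorm rQR = vnorm (R.mulVec yQR) := by
    rw [hrQR, hyQR, hQR, ← mulVec_mulVec, vnorm_orth Q hQ]
  have hnLU : vnorm rLU = vnorm (R.mulVec yLU) := by
    rw [hrLU, hyLU, hQR, ← mulVec_mulVec, vnorm_orth Q hQ]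
  have hyy : vnorm yLU ≤ vnorm yQR := by
    rw [← hpLU, ← hpQR]
    exact hxLU_min xQR hxQR_mem
  have hyQRle : vnorm yQR ≤ specNorm R⁻¹ * vnorm (R.mulVec yQR) := by
    have h := vnorm_mulVec_le R⁻¹ (R.mulVec yQR)
    rwa [mulVec_mulVec, Matrix.nonsing_inv_mul _ hR_inv, one_mulVec] at h
  refine ⟨hxQR_min xLU hxLU_mem, ?_⟩
  calc vnorm rLU = vnorm (R.mulVec yLU) := hnLU
    _ ≤ specNorm R * vnorm yLU := vnorm_mulVec_le R yLU
    _ ≤ specNorm R * vnorm yQR :=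
        mul_le_mul_of_nonneg_left hyy (specNorm_nonneg R)
    _ ≤ specNorm R * (specNorm R⁻¹ * vnorm (R.mulVec yQR)) :=
        mul_le_mul_of_nonneg_left hyQRle (specNorm_nonneg R)
    _ = specNorm R * specNorm R⁻¹ * vnorm rQR := by rw [hnQR, mul_assoc]
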